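/- arXiv:1702.02085 — 3 statements merged into one kernel-verified Lean document; each statement's English description precedes it below -/
import Mathlib

section
/- Let Z_1,...,Z_m be n×n positive semidefinite matrices with eigenvalues r_{ik} ∈ [0,1), U unitary, and weights w_i > 0 summing to 1. Then ∏_{k=1}^n ∏_{i=1}^m ((1-r_{ik})/(1+r_{ik}))^{w_i} ≤ det(I - (Σ_i w_i Z_i)²)/|det(I - U Σ_i w_i Z_i)|². -/
open Matrix BigOperators
open scoped ComplexOrder

section Helpers

lemma trace_eq_sum_eigs {p : ℕ} {G : Matrix (Fin p) (Fin p) ℂ} (hG : G.IsHermitian) :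
    G.trace = ((∑ i, hG.eigenvalues i : ℝ) : ℂ) := by
  rw [hG.trace_eq_sum_eigenvalues]
  exact (Complex.ofReal_sum _ _).symm

/-- For a PSD matrix with real trace at most `p`, the real part of det is at most 1. -/
lemma det_re_le_one_of_trace {p : ℕ} {G : Matrix (Fin p) (Fin p) ℂ} (hG : G.PosSemidef)
    (htr : G.trace.re ≤ p) : G.det.re ≤ 1 := by
  have hdet : G.det = ((∏ i, hG.1.eigenvalues i : ℝ) : ℂ) := by
    rw [hG.1.det_eq_prod_eigenvalues]; push_cast; rfl
  rw [hdet, Complex.ofReal_re]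
  have hsum : ∑ i, hG.1.eigenvalues i ≤ p := by
    have := trace_eq_sum_eigs hG.1
    rw [this, Complex.ofReal_re] at htr; exact htr
  rcases Nat.eq_zero_or_pos p with hp | hp
  · subst hp; simp
  · have hnn : ∀ i ∈ Finset.univ, (0:ℝ) ≤ hG.1.eigenvalues i := fun i _ => hG.eigenvalues_nonneg i
    have hw : ∀ i ∈ (Finset.univ : Finset (Fin p)), (0:ℝ) ≤ (1/p : ℝ) := fun i _ => by positivity
    have hw1 : ∑ _i : Fin p, (1/p : ℝ) = 1 := by
      simp [Finset.sum_const, Finset.card_univ]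
      field_simp
    have h := Real.geom_mean_le_arith_mean_weighted Finset.univ (fun _ => (1/p:ℝ))
      (fun i => hG.1.eigenvalues i) hw hw1 hnn
    rw [Real.finset_prod_rpow _ _ hnn] at h
    have h2 : ∑ i, (1/p:ℝ) * hG.1.eigenvalues i ≤ 1 := by
      rw [← Finset.mul_sum]
      rw [div_mul_eq_mul_div, one_mul, div_le_one (by positivity)]
      exact hsum
    have h3 : (∏ i, hG.1.eigenvalues i) ^ (1/p:ℝ) ≤ 1 := le_trans h h2
    by_contra hlt
    push_neg at hlt
    have : (1:ℝ) < (∏ i, hG.1.eigenvalues i) ^ (1/p:ℝ) := by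
      exact (Real.one_lt_rpow_iff_of_pos (by linarith)).mpr (Or.inl ⟨hlt, by positivity⟩)
    linarith

/-- Rows with unit ℓ² norm give `|det| ≤ 1`. -/
lemma abs_det_le_one_of_unit_rows {p : ℕ} (R : Matrix (Fin p) (Fin p) ℂ)
    (h : ∀ k, ∑ j, Complex.normSq (R k j) = 1) : ‖R.det‖ ≤ 1 := by
  have hpsd : (R * Rᴴ).PosSemidef := Matrix.posSemidef_self_mul_conjTranspose R
  have htr : (R * Rᴴ).trace.re ≤ p := by
    have : (R * Rᴴ).trace = ((p : ℝ) : ℂ) := by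
      rw [Matrix.trace]
      have : ∀ k, (R * Rᴴ).diag k = ((1:ℝ):ℂ) := by
        intro k
        simp only [Matrix.diag, Matrix.mul_apply, Matrix.conjTranspose_apply]
        rw [← h k]
        push_cast
        congr 1; funext j
        rw [← Complex.mul_conj]; rfl
      rw [Finset.sum_congr rfl (fun k _ => this k)]
      simp
    rw [this, Complex.ofReal_re]
  have hdet : (R * Rᴴ).det = ((‖R.det‖ ^ 2 : ℝ) : ℂ) := by
    rw [Matrix.det_mul, Matrix.det_conjTranspose, Complex.star_def, Complex.mul_conj,
      Complex.sq_norm]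
  have := det_re_le_one_of_trace hpsd htr
  rw [hdet, Complex.ofReal_re] at this
  nlinarith [norm_nonneg R.det]

lemma abs_det_one_sub_diag_mul {p : ℕ} (d : Fin p → ℝ) (hd : ∀ k, 0 ≤ d k)
    (Q : Matrix (Fin p) (Fin p) ℂ) (hQ : ∀ k, ∑ j, Complex.normSq (Q k j) = 1) :
    ‖(1 - Matrix.diagonal (fun k => (d k : ℂ)) * Q).det‖ ≤ ∏ k, (1 + d k) := by
  classical
  set a : Fin p → Fin p → ℂ := fun k => (1 : Matrix (Fin p) (Fin p) ℂ) k with ha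
  set b : Fin p → Fin p → ℂ := fun k => (-(d k : ℂ)) • Q k with hb
  have hM : (1 - Matrix.diagonal (fun k => (d k : ℂ)) * Q) = Matrix.of (a + b) := by
    ext k j
    simp [ha, hb, Matrix.sub_apply, Matrix.diagonal_mul, Matrix.one_apply, sub_eq_add_neg]
  have hdet : (1 - Matrix.diagonal (fun k => (d k : ℂ)) * Q).det
      = Matrix.detRowAlternating (a + b) := by rw [hM]; rfl
  rw [hdet]
  rw [show (Matrix.detRowAlternating (a + b) : ℂ)
      = (Matrix.detRowAlternating (R := ℂ) (n := Fin p)).toMultilinearMap (a + b) from rfl]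
  rw [(Matrix.detRowAlternating (R := ℂ) (n := Fin p)).toMultilinearMap.map_add_univ a b]
  refine le_trans (norm_sum_le _ _) ?_
  have key : ∀ s : Finset (Fin p),
      ‖Matrix.detRowAlternating (s.piecewise a b)‖ ≤ ∏ k ∈ Finset.univ \ s, d k := by
    intro s
    set c : Fin p → ℂ := fun k => if k ∈ s then 1 else (-(d k : ℂ)) with hc
    set v : Fin p → Fin p → ℂ := fun k => if k ∈ s then a k else Q k with hv
    have hpw : s.piecewise a b = fun k => c k • v k := by
      funext k
      by_cases h : k ∈ s <;> simp [Finset.piecewise, h, hc, hv, hb]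
    rw [hpw]
    rw [show (Matrix.detRowAlternating (fun k => c k • v k) : ℂ)
      = (Matrix.detRowAlternating (R := ℂ) (n := Fin p)).toMultilinearMap (fun k => c k • v k) from rfl]
    rw [(Matrix.detRowAlternating (R := ℂ) (n := Fin p)).toMultilinearMap.map_smul_univ c v]
    rw [smul_eq_mul, norm_mul]
    have h1 : ‖∏ k, c k‖ = ∏ k ∈ Finset.univ \ s, d k := by
      rw [norm_prod]
      have : ∀ k ∈ Finset.univ, ‖c k‖ = s.piecewise (fun _ => (1:ℝ)) d k := by
        intro k _
        by_cases h : k ∈ s <;> simp [hc, h, Finset.piecewise, abs_of_nonneg (hd k)]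
      rw [Finset.prod_congr rfl this, Finset.prod_piecewise]
      simp
    have h2 : ‖Matrix.detRowAlternating v‖ ≤ 1 := by
      have : (Matrix.detRowAlternating v : ℂ) = (Matrix.of v).det := rfl
      rw [this]
      apply abs_det_le_one_of_unit_rows
      intro k
      by_cases h : k ∈ s
      · simp only [Matrix.of_apply, hv, h, if_true, ha]
        simp [Matrix.one_apply, apply_ite Complex.normSq]
      · simp only [Matrix.of_apply, hv, h, if_false]
        exact hQ k
    calc ‖∏ i, c i‖ * ‖Matrix.detRowAlternating v‖
        ≤ ‖∏ i, c i‖ * 1 := by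
          exact mul_le_mul_of_nonneg_left h2 (norm_nonneg _)
      _ = ∏ k ∈ Finset.univ \ s, d k := by rw [mul_one, h1]
  refine le_trans (Finset.sum_le_sum (fun s _ => key s)) ?_
  rw [Finset.prod_add]
  rw [← Finset.powerset_univ]
  refine le_of_eq ?_
  refine Finset.sum_congr rfl (fun t _ => ?_)
  simp

lemma gconvex : ConvexOn ℝ (Set.Ico (0:ℝ) 1)
    (fun t => Real.log (1 + t) - Real.log (1 - t)) := by
  have hint : interior (Set.Ico (0:ℝ) 1) = Set.Ioo (0:ℝ) 1 := interior_Ico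
  refine convexOn_of_hasDerivWithinAt2_nonneg (convex_Ico 0 1) ?_
    (f' := fun t => (1+t)⁻¹ + (1-t)⁻¹) (f'' := fun t => -1/(1+t)^2 + 1/(1-t)^2) ?_ ?_ ?_
  · apply ContinuousOn.sub
    · apply ContinuousOn.log
      · fun_prop
      · intro x hx; simp only [Set.mem_Ico] at hx; nlinarith [hx.1]
    · apply ContinuousOn.log
      · fun_prop
      · intro x hx; simp only [Set.mem_Ico] at hx; nlinarith [hx.2]
  · intro x hx
    rw [hint] at hx
    obtain ⟨h0, h1⟩ := hx
    have d1 : HasDerivAt (fun t : ℝ => Real.log (1 + t)) ((1+x)⁻¹) x := by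
      have : HasDerivAt (fun t : ℝ => 1 + t) 1 x := (hasDerivAt_id x).const_add 1
      simpa using this.log (by nlinarith)
    have d2 : HasDerivAt (fun t : ℝ => Real.log (1 - t)) (-(1-x)⁻¹) x := by
      have : HasDerivAt (fun t : ℝ => 1 - t) (-1) x := (hasDerivAt_id x).const_sub 1
      have h := this.log (by nlinarith : (1:ℝ) - x ≠ 0)
      convert h using 1
      field_simp
    have := d1.sub d2
    simp only [sub_neg_eq_add] at this
    exact this.hasDerivWithinAt
  · intro x hx
    rw [hint] at hx
    obtain ⟨h0, h1⟩ := hx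
    have d1 : HasDerivAt (fun t : ℝ => (1+t)⁻¹) (-1/(1+x)^2) x := by
      have : HasDerivAt (fun t : ℝ => 1 + t) 1 x := (hasDerivAt_id x).const_add 1
      have h := this.inv (by nlinarith)
      exact h
    have d2 : HasDerivAt (fun t : ℝ => (1-t)⁻¹) (1/(1-x)^2) x := by
      have : HasDerivAt (fun t : ℝ => 1 - t) (-1) x := (hasDerivAt_id x).const_sub 1
      have h := this.inv (by nlinarith : (1:ℝ) - x ≠ 0)
      rw [show (1:ℝ)/(1-x)^2 = -(-1)/(1-x)^2 by ring]
      exact h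
    exact (d1.add d2).hasDerivWithinAt
  · intro x hx
    rw [hint] at hx
    obtain ⟨h0, h1⟩ := hx
    have ha : (0:ℝ) < (1-x)^2 := by nlinarith
    have hab : (1-x)^2 ≤ (1+x)^2 := by nlinarith
    have h2 := one_div_le_one_div_of_le ha hab
    show (0:ℝ) ≤ -1/(1+x)^2 + 1/(1-x)^2
    have h3 : -1/(1+x)^2 = -(1/(1+x)^2) := by ring
    linarith

lemma unitary_rows_normSq {p : ℕ} {Q : Matrix (Fin p) (Fin p) ℂ}
    (hQ : Q ∈ Matrix.unitaryGroup (Fin p) ℂ) (k : Fin p) :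
    ∑ j, Complex.normSq (Q k j) = 1 := by
  have h : Q * star Q = 1 := (Matrix.mem_unitaryGroup_iff).mp hQ
  have h2 : (Q * star Q) k k = (1 : Matrix (Fin p) (Fin p) ℂ) k k := by rw [h]
  rw [Matrix.mul_apply, Matrix.one_apply_eq] at h2
  have h3 : ∑ j, Q k j * (star Q) j k = ((∑ j, Complex.normSq (Q k j) : ℝ) : ℂ) := by
    push_cast
    refine Finset.sum_congr rfl fun j _ => ?_
    rw [Matrix.star_apply, ← Complex.mul_conj]
    rfl
  rw [h3] at h2
  exact_mod_cast h2

/-- Norm preservation for unitary `Q`. -/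
lemma unitary_mulVec_normSq {p : ℕ} {Q : Matrix (Fin p) (Fin p) ℂ}
    (hQ : Q ∈ Matrix.unitaryGroup (Fin p) ℂ) (x : Fin p → ℂ) :
    ∑ j, Complex.normSq ((Q *ᵥ x) j) = ∑ j, Complex.normSq (x j) := by
  have key : ∀ y : Fin p → ℂ, star y ⬝ᵥ y = ((∑ j, Complex.normSq (y j) : ℝ) : ℂ) := by
    intro y
    push_cast
    refine Finset.sum_congr rfl fun j _ => ?_
    rw [Pi.star_apply, ← Complex.mul_conj]
    exact mul_comm _ _
  have h : star (Q *ᵥ x) ⬝ᵥ (Q *ᵥ x) = star x ⬝ᵥ x := by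
    have h1 : Qᴴ * Q = 1 := hQ.1
    rw [Matrix.star_mulVec, Matrix.dotProduct_mulVec, Matrix.vecMul_vecMul, h1,
      Matrix.vecMul_one]
  rw [key, key] at h
  exact_mod_cast h

lemma det_one_sub_diag_mul_ne_zero {p : ℕ} (d : Fin p → ℝ) (hd0 : ∀ k, 0 ≤ d k)
    (hd1 : ∀ k, d k < 1) {Q : Matrix (Fin p) (Fin p) ℂ}
    (hQ : Q ∈ Matrix.unitaryGroup (Fin p) ℂ) :
    (1 - Matrix.diagonal (fun k => (d k : ℂ)) * Q).det ≠ 0 := by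
  intro hdet
  obtain ⟨x, hx0, hx⟩ := (Matrix.exists_mulVec_eq_zero_iff).mpr hdet
  have hxe : x = Matrix.diagonal (fun k => (d k : ℂ)) *ᵥ (Q *ᵥ x) := by
    have h := hx
    rw [Matrix.sub_mulVec, Matrix.one_mulVec, sub_eq_zero] at h
    rw [Matrix.mulVec_mulVec]
    exact h
  set z := Q *ᵥ x with hz
  have hxz : ∀ j, x j = (d j : ℂ) * z j := by
    intro j
    conv_lhs => rw [hxe]
    simp [Matrix.mulVec_diagonal]
  have hnx : ∀ j, Complex.normSq (x j) = (d j)^2 * Complex.normSq (z j) := by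
    intro j
    rw [hxz j, Complex.normSq_mul, Complex.normSq_ofReal]; ring
  have hsum : ∑ j, Complex.normSq (z j) = ∑ j, Complex.normSq (x j) :=
    unitary_mulVec_normSq hQ x
  have hle : ∀ j ∈ Finset.univ, (d j)^2 * Complex.normSq (z j) ≤ Complex.normSq (z j) := by
    intro j _
    have h1 : (d j)^2 ≤ 1 := by nlinarith [hd0 j, hd1 j]
    nlinarith [Complex.normSq_nonneg (z j)]
  have heq : ∑ j, (d j)^2 * Complex.normSq (z j) = ∑ j, Complex.normSq (z j) := by
    calc ∑ j, (d j)^2 * Complex.normSq (z j) = ∑ j, Complex.normSq (x j) := by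
          exact Finset.sum_congr rfl fun j _ => (hnx j).symm
      _ = ∑ j, Complex.normSq (z j) := hsum.symm
  have hall := (Finset.sum_eq_sum_iff_of_le hle).mp heq
  have hz0 : ∀ j, Complex.normSq (z j) = 0 := by
    intro j
    have := hall j (Finset.mem_univ j)
    have h1 : (d j)^2 < 1 := by nlinarith [hd0 j, hd1 j]
    nlinarith [Complex.normSq_nonneg (z j)]
  apply hx0
  funext j
  have hXj : Complex.normSq (x j) = 0 := by rw [hnx j, hz0 j]; ring
  simpa using Complex.normSq_eq_zero.mp hXj

lemma sum_mulVec' {p q : ℕ} {ι : Type*} (t : Finset ι) (A : ι → Matrix (Fin p) (Fin q) ℂ)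
    (x : Fin q → ℂ) : (∑ i ∈ t, A i) *ᵥ x = ∑ i ∈ t, (A i) *ᵥ x := by
  induction t using Finset.cons_induction with
  | empty => simp [Matrix.zero_mulVec]
  | cons i t hit ih => simp [Finset.sum_cons, Matrix.add_mulVec, ih]

end Helpers
lemma dotProduct_sum' {p : ℕ} {ι : Type*} (t : Finset ι) (v : Fin p → ℂ) (f : ι → Fin p → ℂ) :
    v ⬝ᵥ (∑ i ∈ t, f i) = ∑ i ∈ t, v ⬝ᵥ f i := by
  simp only [dotProduct, Finset.sum_apply, Finset.mul_sum]
  exact Finset.sum_comm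

set_option maxHeartbeats 2000000 in
/-- Multi-matrix Harnack-type lower bound: for positive semidefinite `Z i` with eigenvalues
`r i k ∈ [0,1)`, unitary `U`, and weights `w i > 0` with `Σ w i = 1`,
`∏_k ∏_i ((1 - r i k)/(1 + r i k))^(w i) ≤ det(I - (Σ w i Z i)²)/|det(I - U Σ w i Z i)|²`. -/
theorem multi_harnack_lower (n m : ℕ) (Z : Fin m → Matrix (Fin n) (Fin n) ℂ)
    (hZ : ∀ i, (Z i).PosSemidef)
    (r : Fin m → Fin n → ℝ) (hr : ∀ i k, r i k = (hZ i).1.eigenvalues k)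
    (hr0 : ∀ i k, 0 ≤ r i k) (hr1 : ∀ i k, r i k < 1)
    (U : Matrix (Fin n) (Fin n) ℂ) (hU : U ∈ Matrix.unitaryGroup (Fin n) ℂ)
    (w : Fin m → ℝ) (hw : ∀ i, 0 < w i) (hw1 : ∑ i, w i = 1) :
    ∏ k, ∏ i, ((1 - r i k) / (1 + r i k)) ^ (w i)
      ≤ ((1 - (∑ i, (w i : ℂ) • Z i) ^ 2).det).re
          / ‖(1 - U * ∑ i, (w i : ℂ) • Z i).det‖ ^ 2 := by
  classical
  rcases Nat.eq_zero_or_pos n with hn | hn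
  · subst hn
    simp [Matrix.det_fin_zero]
  have hmpos : 0 < m := by
    rcases Nat.eq_zero_or_pos m with h | h
    · exfalso; subst h; simp at hw1
    · exact h
  haveI hNm : Nonempty (Fin m) := ⟨⟨0, hmpos⟩⟩
  haveI hNn : Nonempty (Fin n) := ⟨⟨0, hn⟩⟩
  set W : Matrix (Fin n) (Fin n) ℂ := ∑ i, (w i : ℂ) • Z i with hWdef
  have hWps : W.PosSemidef := by
    apply Finset.sum_induction _ _ (fun A B (hA : Matrix.PosSemidef A) hB => hA.add hB)
      Matrix.PosSemidef.zero
    intro i _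
    refine ⟨?_, ?_⟩
    · show ((w i : ℂ) • Z i)ᴴ = (w i : ℂ) • Z i
      rw [Matrix.conjTranspose_smul, (hZ i).1]
      congr 1
      simp [Complex.star_def, Complex.conj_ofReal]
    · intro x
      exact ((hZ i).smul (Complex.zero_le_real.mpr (hw i).le)).2 x
  have hW : W.IsHermitian := hWps.1
  set s : Fin n → ℝ := hW.eigenvalues with hsdef
  set V : Matrix (Fin n) (Fin n) ℂ := (hW.eigenvectorUnitary : Matrix (Fin n) (Fin n) ℂ)
    with hVdef
  have hVmem : V ∈ Matrix.unitaryGroup (Fin n) ℂ := hW.eigenvectorUnitary.2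
  set D : Matrix (Fin n) (Fin n) ℂ := Matrix.diagonal (fun k => (s k : ℂ)) with hDdef
  have hspec : W = V * D * star V := by
    have h := hW.spectral_theorem
    rw [Unitary.conjStarAlgAut_apply] at h
    exact h
  have hVsV : star V * V = 1 := hVmem.1
  have hVVs : V * star V = 1 := hVmem.2
  -- quadratic forms and overlap coefficients
  set a : Fin m → Fin n → ℝ :=
    fun i k => (star (⇑(hW.eigenvectorBasis k)) ⬝ᵥ (Z i *ᵥ ⇑(hW.eigenvectorBasis k))).re
    with hadef
  set y : Fin m → Fin n → Fin n → ℂ :=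
    fun i k => (star ((hZ i).1.eigenvectorUnitary : Matrix (Fin n) (Fin n) ℂ))
      *ᵥ ⇑(hW.eigenvectorBasis k) with hydef
  set c : Fin m → Fin n → Fin n → ℝ := fun i k l => Complex.normSq (y i k l) with hcdef
  set g : ℝ → ℝ := fun t => Real.log (1 + t) - Real.log (1 - t) with hgdef
  have hunorm : ∀ x : EuclideanSpace ℂ (Fin n), ‖x‖ = 1 →
      ∑ j, Complex.normSq (x j) = 1 := by
    intro x hx
    have h1 : (inner ℂ x x : ℂ) = 1 := by
      rw [inner_self_eq_norm_sq_to_K, hx]; norm_num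
    rw [PiLp.inner_apply] at h1
    have h2 : ∑ j, (inner ℂ (x j) (x j) : ℂ) = ((∑ j, Complex.normSq (x j) : ℝ) : ℂ) := by
      push_cast
      refine Finset.sum_congr rfl fun j _ => ?_
      rw [← Complex.mul_conj]
      exact RCLike.inner_apply _ _
    rw [h2] at h1
    exact_mod_cast h1
  have hu1 : ∀ k, ‖hW.eigenvectorBasis k‖ = 1 := fun k => hW.eigenvectorBasis.orthonormal.1 k
  have hs0 : ∀ k, 0 ≤ s k := fun k => hWps.eigenvalues_nonneg k
  have hWmv : ∀ x : Fin n → ℂ, W *ᵥ x = ∑ i, (w i : ℂ) • (Z i *ᵥ x) := by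
    intro x
    show (∑ i, (w i : ℂ) • Z i) *ᵥ x = _
    rw [sum_mulVec']
    exact Finset.sum_congr rfl fun i _ => Matrix.smul_mulVec _ _ _
  -- (O2)
  have hsa : ∀ k, s k = ∑ i, w i * a i k := by
    intro k
    rw [hsdef, hW.eigenvalues_eq k, hWmv, dotProduct_sum']
    simp only [dotProduct_smul, smul_eq_mul, map_sum, RCLike.re_to_complex]
    refine Finset.sum_congr rfl fun i _ => ?_
    rw [Complex.re_ofReal_mul]
  -- (O3)
  have hac : ∀ i k, a i k = ∑ l, c i k l * r i l := by
    intro i k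
    have hDi : Matrix.diagonal (RCLike.ofReal ∘ (hZ i).1.eigenvalues)
        = Matrix.diagonal (fun l => (r i l : ℂ)) := by
      refine congrArg Matrix.diagonal ?_
      funext l
      show (((hZ i).1.eigenvalues l : ℝ) : ℂ) = ((r i l : ℝ) : ℂ)
      rw [hr i l]
    have hmv : Z i *ᵥ ⇑(hW.eigenvectorBasis k)
        = ((hZ i).1.eigenvectorUnitary : Matrix (Fin n) (Fin n) ℂ)
          *ᵥ (Matrix.diagonal (fun l => (r i l : ℂ)) *ᵥ (y i k)) := by
      conv_lhs => rw [(hZ i).1.spectral_theorem, Unitary.conjStarAlgAut_apply]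
      rw [hDi, ← Matrix.mulVec_mulVec, ← Matrix.mulVec_mulVec]
    have hsy : star (⇑(hW.eigenvectorBasis k))
          ᵥ* ((hZ i).1.eigenvectorUnitary : Matrix (Fin n) (Fin n) ℂ)
        = star (y i k) := by
      show _ = star ((star ((hZ i).1.eigenvectorUnitary : Matrix (Fin n) (Fin n) ℂ))
        *ᵥ ⇑(hW.eigenvectorBasis k))
      rw [Matrix.star_mulVec, Matrix.star_eq_conjTranspose,
        Matrix.conjTranspose_conjTranspose]
    simp only [hadef]
    rw [hmv, Matrix.dotProduct_mulVec, hsy, dotProduct, Complex.re_sum]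
    refine Finset.sum_congr rfl fun l _ => ?_
    rw [Matrix.mulVec_diagonal]
    have hz : star (y i k) l * ((r i l : ℂ) * y i k l)
        = (((r i l) * Complex.normSq (y i k l) : ℝ) : ℂ) := by
      push_cast
      rw [← Complex.mul_conj]
      simp only [Pi.star_apply, Complex.star_def]
      ring
    rw [hz, Complex.ofReal_re, mul_comm]
  have hc0 : ∀ i k l, 0 ≤ c i k l := fun i k l => Complex.normSq_nonneg _
  -- (O5)
  have hc1 : ∀ i k, ∑ l, c i k l = 1 := by
    intro i k
    have hmem : star ((hZ i).1.eigenvectorUnitary : Matrix (Fin n) (Fin n) ℂ)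
        ∈ Matrix.unitaryGroup (Fin n) ℂ := Unitary.star_mem (hZ i).1.eigenvectorUnitary.2
    have := unitary_mulVec_normSq hmem (⇑(hW.eigenvectorBasis k))
    simp only [hcdef, hydef]
    rw [this]
    exact hunorm _ (hu1 k)
  -- (O6)
  have hck : ∀ i l, ∑ k, c i k l = 1 := by
    intro i l
    set v : EuclideanSpace ℂ (Fin n) := (hZ i).1.eigenvectorBasis l with hvdef
    have hyl : ∀ k, y i k l = inner ℂ v (hW.eigenvectorBasis k) := by
      intro k
      show ((star ((hZ i).1.eigenvectorUnitary : Matrix (Fin n) (Fin n) ℂ))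
          *ᵥ ⇑(hW.eigenvectorBasis k)) l = _
      rw [PiLp.inner_apply]
      simp only [Matrix.mulVec, dotProduct, Matrix.star_apply,
        Matrix.IsHermitian.eigenvectorUnitary_apply, RCLike.inner_apply]
      exact Finset.sum_congr rfl fun j _ => mul_comm _ _
    have hp := hW.eigenvectorBasis.sum_inner_mul_inner v v
    have hv1 : (inner ℂ v v : ℂ) = 1 := by
      rw [inner_self_eq_norm_sq_to_K, (hZ i).1.eigenvectorBasis.orthonormal.1 l]
      norm_num
    rw [hv1] at hp
    have h2 : ∀ k, (inner ℂ v (hW.eigenvectorBasis k) : ℂ) * inner ℂ (hW.eigenvectorBasis k) v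
        = ((c i k l : ℝ) : ℂ) := by
      intro k
      rw [← inner_conj_symm (hW.eigenvectorBasis k) v, Complex.mul_conj]
      simp only [hcdef]
      rw [hyl k]
    have h3 : ∑ k, ((c i k l : ℝ) : ℂ) = 1 := by
      rw [show ∑ k, ((c i k l : ℝ) : ℂ)
          = ∑ k, (inner ℂ v (hW.eigenvectorBasis k) : ℂ) * inner ℂ (hW.eigenvectorBasis k) v
        from (Finset.sum_congr rfl fun k _ => (h2 k).symm)]
      exact hp
    exact_mod_cast h3
  -- (O7)
  have ha01 : ∀ i k, a i k ∈ Set.Ico (0:ℝ) 1 := by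
    intro i k
    constructor
    · rw [hac i k]
      exact Finset.sum_nonneg fun l _ => mul_nonneg (hc0 i k l) (hr0 i l)
    · rw [hac i k]
      obtain ⟨l0, hl0⟩ : ∃ l, 0 < c i k l := by
        by_contra h; push_neg at h
        have h0 : ∑ l, c i k l = 0 :=
          Finset.sum_eq_zero fun l _ => le_antisymm (h l) (hc0 i k l)
        rw [hc1 i k] at h0; norm_num at h0
      calc ∑ l, c i k l * r i l < ∑ l, c i k l := by
            apply Finset.sum_lt_sum
            · intro l _; exact mul_le_of_le_one_right (hc0 i k l) (hr1 i l).le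
            · exact ⟨l0, Finset.mem_univ _, by nlinarith [hr1 i l0]⟩
        _ = 1 := hc1 i k
  -- (O8)
  have hs1 : ∀ k, s k < 1 := by
    intro k
    rw [hsa k]
    calc ∑ i, w i * a i k < ∑ i, w i := by
          apply Finset.sum_lt_sum_of_nonempty Finset.univ_nonempty
          intro i _
          have h2 := (ha01 i k).2
          nlinarith [hw i]
      _ = 1 := hw1
  -- (O9) Jensen
  have jensen : ∑ k, g (s k) ≤ ∑ i, w i * ∑ l, g (r i l) := by
    have j1 : ∀ k, g (s k) ≤ ∑ i, w i * g (a i k) := by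
      intro k
      have h := gconvex.map_sum_le (fun i (_ : i ∈ Finset.univ) => (hw i).le) hw1
        (fun i _ => ha01 i k)
      simp only [smul_eq_mul] at h
      simp only [hgdef]
      rw [hsa k]
      exact h
    have j2 : ∀ i k, g (a i k) ≤ ∑ l, c i k l * g (r i l) := by
      intro i k
      have h := gconvex.map_sum_le (fun l (_ : l ∈ Finset.univ) => hc0 i k l) (hc1 i k)
        (fun l _ => ⟨hr0 i l, hr1 i l⟩)
      simp only [smul_eq_mul] at h
      simp only [hgdef]
      rw [hac i k]
      exact h
    have j3 : ∑ k, ∑ i, w i * (∑ l, c i k l * g (r i l))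
        = ∑ i, w i * ∑ l, g (r i l) := by
      rw [Finset.sum_comm]
      refine Finset.sum_congr rfl fun i _ => ?_
      rw [← Finset.mul_sum]
      congr 1
      rw [Finset.sum_comm]
      refine Finset.sum_congr rfl fun l _ => ?_
      rw [← Finset.sum_mul, hck i l, one_mul]
    calc ∑ k, g (s k) ≤ ∑ k, ∑ i, w i * g (a i k) := Finset.sum_le_sum fun k _ => j1 k
      _ ≤ ∑ k, ∑ i, w i * (∑ l, c i k l * g (r i l)) := by
          refine Finset.sum_le_sum fun k _ => Finset.sum_le_sum fun i _ => ?_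
          exact mul_le_mul_of_nonneg_left (j2 i k) (hw i).le
      _ = ∑ i, w i * ∑ l, g (r i l) := j3
  -- (O12)
  have step4 : ∏ k, ∏ i, ((1 - r i k) / (1 + r i k)) ^ (w i)
      ≤ ∏ k, ((1 - s k) / (1 + s k)) := by
    have hlhs : ∏ k, ∏ i, ((1 - r i k) / (1 + r i k)) ^ (w i)
        = Real.exp (∑ k, ∑ i, -(w i * g (r i k))) := by
      have h1 : ∀ k i, ((1 - r i k) / (1 + r i k)) ^ (w i)
          = Real.exp (-(w i * g (r i k))) := by
        intro k i
        rw [Real.rpow_def_of_pos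
          (div_pos (by nlinarith [hr1 i k]) (by nlinarith [hr0 i k]))]
        congr 1
        rw [Real.log_div (by nlinarith [hr1 i k]) (by nlinarith [hr0 i k])]
        simp only [hgdef]
        ring
      rw [Real.exp_sum]
      refine Finset.prod_congr rfl fun k _ => ?_
      rw [Real.exp_sum]
      exact Finset.prod_congr rfl fun i _ => h1 k i
    have hrhs : ∏ k, ((1 - s k) / (1 + s k)) = Real.exp (∑ k, -(g (s k))) := by
      have h1 : ∀ k, (1 - s k) / (1 + s k) = Real.exp (-(g (s k))) := by
        intro k
        rw [show -(g (s k)) = Real.log (1 - s k) - Real.log (1 + s k) by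
          simp only [hgdef]; ring]
        rw [Real.exp_sub, Real.exp_log (by nlinarith [hs1 k]), Real.exp_log (by nlinarith [hs0 k])]
      rw [Real.exp_sum]
      exact Finset.prod_congr rfl fun k _ => h1 k
    rw [hlhs, hrhs]
    apply Real.exp_le_exp.mpr
    have harr : ∑ k, ∑ i, -(w i * g (r i k)) = -(∑ i, w i * ∑ k, g (r i k)) := by
      rw [Finset.sum_comm]
      rw [← Finset.sum_neg_distrib]
      refine Finset.sum_congr rfl fun i _ => ?_
      rw [Finset.mul_sum, ← Finset.sum_neg_distrib]
    rw [harr]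
    have harr2 : ∑ k, -(g (s k)) = -(∑ k, g (s k)) := by rw [← Finset.sum_neg_distrib]
    rw [harr2]
    exact neg_le_neg jensen
  -- determinant identities
  have conjdet : ∀ B : Matrix (Fin n) (Fin n) ℂ, (1 - V * B * star V).det = (1 - B).det := by
    intro B
    rw [Matrix.mul_assoc, Matrix.det_one_sub_mul_comm, Matrix.mul_assoc, hVsV, Matrix.mul_one]
  -- (O13)
  have hdm : (1 - W).det = ∏ k, (1 - (s k : ℂ)) := by
    rw [show (1 : Matrix (Fin n) (Fin n) ℂ) - W = 1 - V * D * star V by rw [← hspec]]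
    rw [conjdet]
    rw [show (1 : Matrix (Fin n) (Fin n) ℂ) - D = Matrix.diagonal (fun k => 1 - (s k : ℂ)) by
      rw [hDdef, ← Matrix.diagonal_one, Matrix.diagonal_sub]]
    rw [Matrix.det_diagonal]
  have hdp : (1 + W).det = ∏ k, (1 + (s k : ℂ)) := by
    have h1 : (1 : Matrix (Fin n) (Fin n) ℂ) + W = 1 - V * (-D) * star V := by
      rw [Matrix.mul_neg, Matrix.neg_mul, sub_neg_eq_add, ← hspec]
    rw [h1, conjdet]
    rw [show (1 : Matrix (Fin n) (Fin n) ℂ) - (-D) = Matrix.diagonal (fun k => 1 + (s k : ℂ)) by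
      rw [sub_neg_eq_add, hDdef, ← Matrix.diagonal_one, Matrix.diagonal_add]]
    rw [Matrix.det_diagonal]
  have hnum : ((1 - W ^ 2).det) = (((∏ k, (1 - s k)) * (∏ k, (1 + s k)) : ℝ) : ℂ) := by
    have hfac : (1 : Matrix (Fin n) (Fin n) ℂ) - W ^ 2 = (1 - W) * (1 + W) := by noncomm_ring
    rw [hfac, Matrix.det_mul, hdm, hdp]
    push_cast
    rfl
  -- (O14)
  set Q' : Matrix (Fin n) (Fin n) ℂ := star V * U * V with hQ'def
  have hQ'mem : Q' ∈ Matrix.unitaryGroup (Fin n) ℂ :=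
    mul_mem (mul_mem (Unitary.star_mem hVmem) hU) hVmem
  have hUW : (1 - U * W).det = (1 - D * Q').det := by
    have h1 : U * W = V * (Q' * D) * star V := by
      rw [hspec, hQ'def]
      simp only [← Matrix.mul_assoc]
      rw [show V * star V * U * V * D = U * V * D by rw [hVVs, Matrix.one_mul]]
    rw [h1, conjdet, Matrix.det_one_sub_mul_comm]
  have habs : ‖(1 - U * W).det‖ ≤ ∏ k, (1 + s k) := by
    rw [hUW, hDdef]
    exact abs_det_one_sub_diag_mul s hs0 Q' (fun k => unitary_rows_normSq hQ'mem k)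
  -- (O15)
  have hne : (1 - U * W).det ≠ 0 := by
    rw [hUW, hDdef]
    exact det_one_sub_diag_mul_ne_zero s hs0 hs1 hQ'mem
  -- final arithmetic
  have hP0 : 0 < ∏ k, (1 + s k) := Finset.prod_pos fun k _ => by nlinarith [hs0 k]
  have hN0 : 0 ≤ (∏ k, (1 - s k)) * ∏ k, (1 + s k) :=
    mul_nonneg (Finset.prod_nonneg fun k _ => by nlinarith [hs1 k]) hP0.le
  have hA0 : 0 < ‖(1 - U * W).det‖ := norm_pos_iff.mpr hne
  have hgoalre : ((1 - W ^ 2).det).re = (∏ k, (1 - s k)) * ∏ k, (1 + s k) := by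
    rw [hnum, Complex.ofReal_re]
  rw [hgoalre]
  calc ∏ k, ∏ i, ((1 - r i k) / (1 + r i k)) ^ (w i)
      ≤ ∏ k, ((1 - s k) / (1 + s k)) := step4
    _ = ((∏ k, (1 - s k)) * ∏ k, (1 + s k)) / (∏ k, (1 + s k)) ^ 2 := by
        rw [Finset.prod_div_distrib]
        field_simp
    _ ≤ ((∏ k, (1 - s k)) * ∏ k, (1 + s k)) / ‖(1 - U * W).det‖ ^ 2 := by
        have hsq : ‖(1 - U * W).det‖ ^ 2 ≤ (∏ k, (1 + s k)) ^ 2 := by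
          nlinarith [habs, hA0]
        exact div_le_div_of_nonneg_left hN0 (by positivity) hsq
end

section
/- Let Z_1,...,Z_m be n×n positive semidefinite matrices with eigenvalues r_{ik}, k = 1,...,n, for Z_i, and let w_i > 0 with Σ w_i = 1. Let s_1 ≥ ... ≥ s_n be the eigenvalues of W = Σ_i w_i Z_i. If all r_{ik} ∈ [0,1), then ∏_{k=1}^n (1+s_k)/(1-s_k) ≤ ∏_{k=1}^n ∏_{i=1}^m ((1+r_{ik})/(1-r_{ik}))^{w_i}. -/
open Matrix BigOperators
open scoped ComplexOrder

noncomputable section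


noncomputable def harnackG (t : ℝ) : ℝ := Real.log (1 + t) - Real.log (1 - t)

lemma harnackG_convex : ConvexOn ℝ (Set.Ico (0:ℝ) 1) harnackG := by
  have hint : interior (Set.Ico (0:ℝ) 1) = Set.Ioo 0 1 := interior_Ico
  apply convexOn_of_hasDerivWithinAt2_nonneg (f' := fun t => (1+t)⁻¹ + (1-t)⁻¹)
    (f'' := fun t => ((1-t)^2)⁻¹ - ((1+t)^2)⁻¹) (convex_Ico 0 1)
  · intro x hx
    have h1 : (1:ℝ) + x ≠ 0 := by nlinarith [hx.1, hx.2]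
    have h2 : (1:ℝ) - x ≠ 0 := by nlinarith [hx.1, hx.2]
    apply ContinuousAt.continuousWithinAt
    exact (((hasDerivAt_id x).const_add 1).log h1).continuousAt.sub
      (((hasDerivAt_id x).neg.const_add 1).log h2).continuousAt
  · intro x hx
    rw [hint] at hx
    have h1 : (1:ℝ) + x ≠ 0 := by nlinarith [hx.1, hx.2]
    have h2 : (1:ℝ) - x ≠ 0 := by nlinarith [hx.1, hx.2]
    have d1 : HasDerivAt (fun t:ℝ => 1 + t) 1 x := (hasDerivAt_id x).const_add 1
    have d2 : HasDerivAt (fun t:ℝ => 1 - t) (-1) x := by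
      exact (hasDerivAt_id' x).const_sub 1
    have := ((d1.log h1).sub (d2.log h2))
    have h : HasDerivAt harnackG ((1+x)⁻¹ + (1-x)⁻¹) x := by
      exact this.congr_deriv (by ring)
    exact h.hasDerivWithinAt
  · intro x hx
    rw [hint] at hx
    have h1 : (1:ℝ) + x ≠ 0 := by nlinarith [hx.1, hx.2]
    have h2 : (1:ℝ) - x ≠ 0 := by nlinarith [hx.1, hx.2]
    have d1 : HasDerivAt (fun t:ℝ => 1 + t) 1 x := (hasDerivAt_id x).const_add 1
    have d2 : HasDerivAt (fun t:ℝ => 1 - t) (-1) x := by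
      exact (hasDerivAt_id' x).const_sub 1
    have := ((d1.inv h1).add (d2.inv h2))
    have h : HasDerivAt (fun t:ℝ => (1+t)⁻¹ + (1-t)⁻¹) (((1-x)^2)⁻¹ - ((1+x)^2)⁻¹) x := by
      exact this.congr_deriv (by ring)
    exact h.hasDerivWithinAt
  · intro x hx
    rw [hint] at hx
    have h2 : (0:ℝ) < 1 - x := by linarith [hx.2]
    have h1 : (0:ℝ) < 1 + x := by linarith [hx.1]
    rw [sub_nonneg]
    apply inv_anti₀
    · positivity
    · push_cast; nlinarith [hx.1]

/-- Doubly-stochastic Jensen step. -/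
lemma sum_harnackG_le {n : ℕ} (d : Fin n → Fin n → ℝ) (ρ : Fin n → ℝ)
    (hd0 : ∀ k l, 0 ≤ d k l) (hrow : ∀ k, ∑ l, d k l = 1) (hcol : ∀ l, ∑ k, d k l = 1)
    (hρ : ∀ l, ρ l ∈ Set.Ico (0:ℝ) 1) :
    ∑ k, harnackG (∑ l, d k l * ρ l) ≤ ∑ l, harnackG (ρ l) := by
  have step : ∀ k, harnackG (∑ l, d k l * ρ l) ≤ ∑ l, d k l * harnackG (ρ l) := by
    intro k
    have := harnackG_convex.map_sum_le (t := Finset.univ) (w := d k) (p := ρ)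
      (fun l _ => hd0 k l) (hrow k) (fun l _ => hρ l)
    simpa [smul_eq_mul] using this
  calc ∑ k, harnackG (∑ l, d k l * ρ l) ≤ ∑ k, ∑ l, d k l * harnackG (ρ l) :=
        Finset.sum_le_sum fun k _ => step k
    _ = ∑ l, (∑ k, d k l) * harnackG (ρ l) := by
        rw [Finset.sum_comm]; simp [Finset.sum_mul]
    _ = ∑ l, harnackG (ρ l) := by simp [hcol]

lemma diag_conj_entry {n : ℕ} (Nm : Matrix (Fin n) (Fin n) ℂ) (ρ : Fin n → ℝ) (k : Fin n) :
    (Nm * Matrix.diagonal (fun l => (ρ l : ℂ)) * star Nm) k k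
      = ((∑ l, Complex.normSq (Nm k l) * ρ l : ℝ) : ℂ) := by
  push_cast
  rw [Matrix.mul_apply]
  apply Finset.sum_congr rfl
  intro l _
  rw [Matrix.mul_diagonal, Matrix.star_apply, RCLike.star_def, mul_right_comm,
    Complex.mul_conj]


/-- For positive semidefinite `Z i` with eigenvalues `r i k ∈ [0,1)`, weights `w i > 0`
summing to `1`, and `s` the eigenvalues of `W = Σ w i Z i`,
`∏ (1 + s k)/(1 - s k) ≤ ∏_k ∏_i ((1 + r i k)/(1 - r i k))^(w i)`. -/
theorem eigenvalue_harnack_sum (n m : ℕ) (Z : Fin m → Matrix (Fin n) (Fin n) ℂ)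
    (hZ : ∀ i, (Z i).PosSemidef)
    (r : Fin m → Fin n → ℝ) (hr : ∀ i k, r i k = (hZ i).1.eigenvalues k)
    (hr0 : ∀ i k, 0 ≤ r i k) (hr1 : ∀ i k, r i k < 1)
    (w : Fin m → ℝ) (hw : ∀ i, 0 < w i) (hw1 : ∑ i, w i = 1)
    (hW : (∑ i, (w i : ℂ) • Z i).IsHermitian)
    (s : Fin n → ℝ) (hs : ∀ k, s k = hW.eigenvalues k) :
    ∏ k, (1 + s k) / (1 - s k)
      ≤ ∏ k, ∏ i, ((1 + r i k) / (1 - r i k)) ^ (w i) := by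
  classical
  set U : Matrix (Fin n) (Fin n) ℂ := (hW.eigenvectorUnitary : Matrix (Fin n) (Fin n) ℂ) with hU
  set N : Fin m → Matrix (Fin n) (Fin n) ℂ :=
    fun i => star U * ((hZ i).1.eigenvectorUnitary : Matrix (Fin n) (Fin n) ℂ) with hN
  set d : Fin m → Fin n → Fin n → ℝ := fun i k l => Complex.normSq (N i k l) with hd
  set a : Fin m → Fin n → ℝ := fun i k => ∑ l, d i k l * r i l with ha
  have hd0 : ∀ i k l, 0 ≤ d i k l := fun i k l => Complex.normSq_nonneg _
  -- unitarity of N i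
  have hU1 : U * star U = 1 := Matrix.mem_unitaryGroup_iff.mp hW.eigenvectorUnitary.2
  have hU2 : star U * U = 1 := Matrix.mem_unitaryGroup_iff'.mp hW.eigenvectorUnitary.2
  have hNN : ∀ i, N i * star (N i) = 1 := by
    intro i
    have hV1 : ((hZ i).1.eigenvectorUnitary : Matrix (Fin n) (Fin n) ℂ)
        * star ((hZ i).1.eigenvectorUnitary : Matrix (Fin n) (Fin n) ℂ) = 1 :=
      Matrix.mem_unitaryGroup_iff.mp ((hZ i).1.eigenvectorUnitary).2
    show (star U * _) * star (star U * _) = 1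
    rw [Matrix.star_mul, star_star, Matrix.mul_assoc,
      ← Matrix.mul_assoc _ (star ((hZ i).1.eigenvectorUnitary : Matrix (Fin n) (Fin n) ℂ)) U,
      hV1, Matrix.one_mul, hU2]
  have hNN' : ∀ i, star (N i) * N i = 1 := by
    intro i
    have hV2 : star ((hZ i).1.eigenvectorUnitary : Matrix (Fin n) (Fin n) ℂ)
        * ((hZ i).1.eigenvectorUnitary : Matrix (Fin n) (Fin n) ℂ) = 1 :=
      Matrix.mem_unitaryGroup_iff'.mp ((hZ i).1.eigenvectorUnitary).2
    show star (star U * _) * (star U * _) = 1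
    rw [Matrix.star_mul, star_star, Matrix.mul_assoc, ← Matrix.mul_assoc U (star U),
      hU1, Matrix.one_mul, hV2]
  -- row and column sums of d
  have hrow : ∀ i k, ∑ l, d i k l = 1 := by
    intro i k
    have h := congrArg (fun M : Matrix (Fin n) (Fin n) ℂ => M k k) (hNN i)
    simp only [Matrix.mul_apply, Matrix.star_apply, RCLike.star_def, Complex.mul_conj,
      Matrix.one_apply_eq] at h
    show (∑ l, Complex.normSq (N i k l)) = 1
    exact_mod_cast h
  have hcol : ∀ i l, ∑ k, d i k l = 1 := by
    intro i l
    have h := congrArg (fun M : Matrix (Fin n) (Fin n) ℂ => M l l) (hNN' i)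
    simp only [Matrix.mul_apply, Matrix.star_apply, RCLike.star_def,
      Matrix.one_apply_eq] at h
    have h2 : ∑ k, (Complex.normSq (N i k l) : ℂ) = 1 := by
      rw [← h]
      exact Finset.sum_congr rfl fun k _ => by rw [mul_comm, Complex.mul_conj]
    show (∑ k, Complex.normSq (N i k l)) = 1
    exact_mod_cast h2
  -- diagonal entries of conjugated Z i
  have hdiag : ∀ i k, (star U * Z i * U) k k = ((a i k : ℝ) : ℂ) := by
    intro i k
    have hsd := (hZ i).1.spectral_theorem
    have hDeq : (RCLike.ofReal ∘ (hZ i).1.eigenvalues : Fin n → ℂ)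
        = fun l => ((r i l : ℝ) : ℂ) := funext fun l => by rw [hr]; rfl
    have key : star U * Z i * U
        = N i * Matrix.diagonal (fun l => ((r i l : ℝ) : ℂ)) * star (N i) := by
      conv_lhs => rw [hsd, Unitary.conjStarAlgAut_apply]
      rw [hDeq]
      show star U * (_ * _ * _) * U = (star U * _) * _ * star (star U * _)
      rw [Matrix.star_mul, star_star]
      simp only [Matrix.mul_assoc]
    rw [key, diag_conj_entry]
  -- s k = ∑ i, w i * a i k
  have hskey : ∀ k, s k = ∑ i, w i * a i k := by
    intro k
    have hWd := hW.conjStarAlgAut_star_eigenvectorUnitary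
    rw [Unitary.conjStarAlgAut_star_apply] at hWd
    have hsum : star U * (∑ i, (w i : ℂ) • Z i) * U
        = ∑ i, (w i : ℂ) • (star U * Z i * U) := by
      rw [Finset.mul_sum, Finset.sum_mul]
      apply Finset.sum_congr rfl
      intro i _
      rw [Matrix.mul_smul, Matrix.smul_mul]
    rw [hsum] at hWd
    have h := congrArg (fun M : Matrix (Fin n) (Fin n) ℂ => M k k) hWd
    simp only [Matrix.sum_apply, Matrix.smul_apply, Matrix.diagonal_apply_eq,
      Function.comp] at h
    norm_cast at h
    rw [hs k]
    have h' : ((∑ i, w i * a i k : ℝ) : ℂ) = ((hW.eigenvalues k : ℝ) : ℂ) := by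
      push_cast
      have e : ∀ i : Fin m, (w i : ℂ) * (a i k : ℂ) = w i • (star U * Z i * U) k k := by
        intro i
        rw [hdiag i k, Complex.real_smul]
      rw [Finset.sum_congr rfl fun i _ => e i]
      exact h
    exact_mod_cast h'.symm
  -- membership
  have hrm : ∀ i l, r i l ∈ Set.Ico (0:ℝ) 1 := fun i l => ⟨hr0 i l, hr1 i l⟩
  have ham : ∀ i k, a i k ∈ Set.Ico (0:ℝ) 1 := by
    intro i k
    have := (convex_Ico (0:ℝ) 1).sum_mem (t := Finset.univ) (fun l _ => hd0 i k l)
      (hrow i k) (fun l _ => hrm i l)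
    simpa [smul_eq_mul] using this
  have hsm : ∀ k, s k ∈ Set.Ico (0:ℝ) 1 := by
    intro k
    rw [hskey]
    have := (convex_Ico (0:ℝ) 1).sum_mem (t := Finset.univ) (fun i _ => (hw i).le)
      hw1 (fun i _ => ham i k)
    simpa [smul_eq_mul] using this
  -- the log inequality
  have hlog : ∑ k, harnackG (s k) ≤ ∑ k, ∑ i, w i * harnackG (r i k) := by
    calc ∑ k, harnackG (s k) ≤ ∑ k, ∑ i, w i * harnackG (a i k) := by
          apply Finset.sum_le_sum
          intro k _
          rw [hskey k]
          have := harnackG_convex.map_sum_le (t := Finset.univ) (w := w) (p := fun i => a i k)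
            (fun i _ => (hw i).le) hw1 (fun i _ => ham i k)
          simpa [smul_eq_mul] using this
      _ = ∑ i, w i * ∑ k, harnackG (a i k) := by
          rw [Finset.sum_comm]
          simp [Finset.mul_sum]
      _ ≤ ∑ i, w i * ∑ k, harnackG (r i k) := by
          apply Finset.sum_le_sum
          intro i _
          apply mul_le_mul_of_nonneg_left _ (hw i).le
          exact sum_harnackG_le (d i) (r i) (hd0 i) (hrow i) (hcol i) (hrm i)
      _ = ∑ k, ∑ i, w i * harnackG (r i k) := by
          rw [Finset.sum_comm]
          simp [Finset.mul_sum]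
  -- convert to products
  have hL : ∏ k, (1 + s k) / (1 - s k) = Real.exp (∑ k, harnackG (s k)) := by
    rw [Real.exp_sum]
    apply Finset.prod_congr rfl
    intro k _
    have h1 : (0:ℝ) < 1 + s k := by linarith [(hsm k).1]
    have h2 : (0:ℝ) < 1 - s k := by linarith [(hsm k).2]
    rw [harnackG, Real.exp_sub, Real.exp_log h1, Real.exp_log h2]
  have hR : ∏ k, ∏ i, ((1 + r i k) / (1 - r i k)) ^ (w i)
      = Real.exp (∑ k, ∑ i, w i * harnackG (r i k)) := by
    rw [Real.exp_sum]
    apply Finset.prod_congr rfl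
    intro k _
    rw [Real.exp_sum]
    apply Finset.prod_congr rfl
    intro i _
    have h1 : (0:ℝ) < 1 + r i k := by linarith [(hrm i k).1]
    have h2 : (0:ℝ) < 1 - r i k := by linarith [(hrm i k).2]
    rw [Real.rpow_def_of_pos (by positivity), Real.log_div (by positivity) (by positivity),
      harnackG, mul_comm]
  rw [hL, hR]
  exact Real.exp_le_exp.mpr hlog

end
end

section
/- Let A and B be n×n Hermitian matrices such that λ_k(A+B) = λ_k(A) + λ_k(B) for all k = 1,...,n, where λ_k denotes the k-th largest eigenvalue. Then A and B are simultaneously unitarily diagonalizable with their eigenvalues appearing on the diagonal in the same (nonincreasing) order. -/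
open Matrix BigOperators Finset
open scoped ComplexOrder

lemma card_filter_val_lt (n k : ℕ) (hk : k ≤ n) :
    (Finset.univ.filter (fun i : Fin n => (i : ℕ) < k)).card = k := by
  have : (Finset.univ.filter (fun i : Fin n => (i : ℕ) < k))
      = Finset.map (Fin.castLEEmb hk) Finset.univ := by
    ext i
    simp only [mem_filter, mem_univ, true_and, Finset.mem_map, Fin.castLEEmb]
    constructor
    · intro hi
      exact ⟨⟨i, hi⟩, by ext; simp⟩
    · rintro ⟨j, -, rfl⟩
      simpa using j.isLt
  rw [this]
  simp

lemma lp_bound {n : ℕ} (α c : Fin n → ℝ) (hα : Antitone α) (k : ℕ) (hk : k ≤ n)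
    (hc0 : ∀ i, 0 ≤ c i) (hc1 : ∀ i, c i ≤ 1) (hcs : ∑ i, c i = (k : ℝ)) :
    ∑ i, c i * α i ≤ ∑ i ∈ Finset.univ.filter (fun i : Fin n => (i : ℕ) < k), α i := by
  rcases Nat.eq_zero_or_pos n with rfl | hn
  · interval_cases k
    simp
  set S := Finset.univ.filter (fun i : Fin n => (i : ℕ) < k) with hS
  have hcard : S.card = k := card_filter_val_lt n k hk
  set t : ℝ := α ⟨min k (n - 1), by omega⟩ with ht
  have hsplit : ∑ i, c i * α i = ∑ i ∈ S, c i * α i + ∑ i ∈ Sᶜ, c i * α i := by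
    rw [Finset.sum_add_sum_compl]
  have hSsum : ∑ i ∈ S, c i + ∑ i ∈ Sᶜ, c i = (k : ℝ) := by
    rw [Finset.sum_add_sum_compl]; exact hcs
  have h1 : ∑ i ∈ Sᶜ, c i * α i ≤ t * ∑ i ∈ Sᶜ, c i := by
    rw [Finset.mul_sum]
    apply Finset.sum_le_sum
    intro i hi
    have hik : ¬ ((i : ℕ) < k) := by simpa [hS] using hi
    have : α i ≤ t := by
      apply hα
      show (⟨min k (n-1), _⟩ : Fin n) ≤ i
      simp only [Fin.le_def]
      omega
    calc c i * α i ≤ c i * t := by nlinarith [hc0 i]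
      _ = t * c i := mul_comm _ _
  have h2 : t * ∑ i ∈ S, (1 - c i) ≤ ∑ i ∈ S, (1 - c i) * α i := by
    rw [Finset.mul_sum]
    apply Finset.sum_le_sum
    intro i hi
    have hik : (i : ℕ) < k := by simpa [hS] using hi
    have hti : t ≤ α i := by
      apply hα
      show i ≤ (⟨min k (n-1), _⟩ : Fin n)
      simp only [Fin.le_def]
      omega
    nlinarith [hc1 i]
  have h3 : ∑ i ∈ S, (1 - c i) = (k : ℝ) - ∑ i ∈ S, c i := by
    rw [Finset.sum_sub_distrib]
    simp [hcard]
  have h4 : ∑ i ∈ S, (1 - c i) * α i = ∑ i ∈ S, α i - ∑ i ∈ S, c i * α i := by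
    rw [← Finset.sum_sub_distrib]
    congr 1; ext i; ring
  rw [hsplit]
  have h6 : t * ∑ i ∈ S, (1 - c i) = t * ((k:ℝ) - ∑ i ∈ S, c i) := by rw [h3]
  have h5 : t * ∑ i ∈ Sᶜ, c i = t * ((k:ℝ) - ∑ i ∈ S, c i) := by
    congr 1; linarith
  linarith


section helpers
variable {n : ℕ} (Q : Matrix (Fin n) (Fin n) ℂ)

lemma row_sum_one (hQ : Q ∈ Matrix.unitaryGroup (Fin n) ℂ) (j : Fin n) :
    ∑ l, Complex.normSq (Q j l) = 1 := by
  have h1 : Q * Qᴴ = 1 := by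
    rw [← Matrix.star_eq_conjTranspose]
    exact (Matrix.mem_unitaryGroup_iff).mp hQ
  have h2 : (Q * Qᴴ) j j = (1 : Matrix (Fin n) (Fin n) ℂ) j j := by rw [h1]
  rw [Matrix.mul_apply, Matrix.one_apply_eq] at h2
  have h3 : ∀ l, Q j l * Qᴴ l j = ((Complex.normSq (Q j l) : ℝ) : ℂ) := by
    intro l
    rw [Matrix.conjTranspose_apply, Complex.star_def, Complex.mul_conj]
  rw [Finset.sum_congr rfl (fun l _ => h3 l)] at h2
  have := congrArg Complex.re h2
  simpa [Complex.re_sum] using this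

lemma col_sum_one (hQ : Q ∈ Matrix.unitaryGroup (Fin n) ℂ) (l : Fin n) :
    ∑ j, Complex.normSq (Q j l) = 1 := by
  have h1 : Qᴴ * Q = 1 := by
    rw [← Matrix.star_eq_conjTranspose]
    exact (Matrix.mem_unitaryGroup_iff').mp hQ
  have h2 : (Qᴴ * Q) l l = (1 : Matrix (Fin n) (Fin n) ℂ) l l := by rw [h1]
  rw [Matrix.mul_apply, Matrix.one_apply_eq] at h2
  have h3 : ∀ j, Qᴴ l j * Q j l = ((Complex.normSq (Q j l) : ℝ) : ℂ) := by
    intro j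
    rw [Matrix.conjTranspose_apply, Complex.star_def, mul_comm, Complex.mul_conj]
  rw [Finset.sum_congr rfl (fun j _ => h3 j)] at h2
  have := congrArg Complex.re h2
  simpa [Complex.re_sum] using this

lemma conj_diag_entry (α : Fin n → ℝ) (j : Fin n) :
    ((Q * Matrix.diagonal (fun i => (α i : ℂ)) * Qᴴ) j j).re
      = ∑ l, α l * Complex.normSq (Q j l) := by
  rw [Matrix.mul_apply, Complex.re_sum]
  apply Finset.sum_congr rfl
  intro l _
  rw [Matrix.mul_diagonal, Matrix.conjTranspose_apply, Complex.star_def]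
  have h : Q j l * (α l : ℂ) * (starRingEnd ℂ) (Q j l)
      = (α l : ℂ) * (Q j l * (starRingEnd ℂ) (Q j l)) := by ring
  rw [h, Complex.mul_conj, ← Complex.ofReal_mul, Complex.ofReal_re]

lemma kyFan (hQ : Q ∈ Matrix.unitaryGroup (Fin n) ℂ)
    (α : Fin n → ℝ) (hα : Antitone α) (k : ℕ) (hk : k ≤ n) :
    ∑ j ∈ Finset.univ.filter (fun i : Fin n => (i : ℕ) < k),
        ((Q * Matrix.diagonal (fun i => (α i : ℂ)) * Qᴴ) j j).re
      ≤ ∑ j ∈ Finset.univ.filter (fun i : Fin n => (i : ℕ) < k), α j := by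
  set S := Finset.univ.filter (fun i : Fin n => (i : ℕ) < k) with hS
  set c : Fin n → ℝ := fun l => ∑ j ∈ S, Complex.normSq (Q j l) with hc
  have hLHS : ∑ j ∈ S, ((Q * Matrix.diagonal (fun i => (α i : ℂ)) * Qᴴ) j j).re
      = ∑ l, c l * α l := by
    rw [Finset.sum_congr rfl (fun j _ => conj_diag_entry Q α j), Finset.sum_comm]
    apply Finset.sum_congr rfl
    intro l _
    rw [hc, Finset.sum_mul]
    apply Finset.sum_congr rfl
    intro j _
    ring
  rw [hLHS]
  apply lp_bound α c hα k hk
  · intro l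
    exact Finset.sum_nonneg fun j _ => Complex.normSq_nonneg _
  · intro l
    calc c l ≤ ∑ j, Complex.normSq (Q j l) :=
        Finset.sum_le_sum_of_subset_of_nonneg (Finset.subset_univ S)
          (fun j _ _ => Complex.normSq_nonneg _)
      _ = 1 := col_sum_one Q hQ l
  · rw [Finset.sum_comm]
    rw [Finset.sum_congr rfl (fun j _ => row_sum_one Q hQ j)]
    simp [card_filter_val_lt n k hk]
    exact card_filter_val_lt n k hk

lemma frob (hQ : Q ∈ Matrix.unitaryGroup (Fin n) ℂ) (α : Fin n → ℝ) :
    ∑ i, ∑ j, Complex.normSq ((Q * Matrix.diagonal (fun i => (α i : ℂ)) * Qᴴ) i j)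
      = ∑ i, α i * α i := by
  set M := Q * Matrix.diagonal (fun i => (α i : ℂ)) * Qᴴ with hM
  have hD : (Matrix.diagonal (fun i => (α i : ℂ))).IsHermitian := by
    ext i j
    rw [Matrix.conjTranspose_apply]
    by_cases h : i = j
    · subst h
      simp [Matrix.diagonal_apply_eq, Complex.star_def, Complex.conj_ofReal]
    · simp [Matrix.diagonal_apply_ne, h, Ne.symm h]
  have hMH : M.IsHermitian := Matrix.isHermitian_mul_mul_conjTranspose Q hD
  have inner : ∀ i, ∑ j, Complex.normSq (M i j) = ((M * M) i i).re := by
    intro i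
    rw [Matrix.mul_apply, Complex.re_sum]
    apply Finset.sum_congr rfl
    intro j _
    have : M j i = star (M i j) := by
      conv_lhs => rw [← hMH.eq]
      rw [Matrix.conjTranspose_apply]
    rw [this, Complex.star_def, Complex.mul_conj, Complex.ofReal_re]
  have hQ2 : Qᴴ * Q = 1 := by
    rw [← Matrix.star_eq_conjTranspose]
    exact (Matrix.mem_unitaryGroup_iff').mp hQ
  have hDD : Matrix.diagonal (fun i => (α i : ℂ)) * Matrix.diagonal (fun i => (α i : ℂ))
      = Matrix.diagonal (fun i => ((α i : ℂ) * (α i : ℂ))) :=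
    Matrix.diagonal_mul_diagonal _ _
  have hMM : M * M = Q * Matrix.diagonal (fun i => ((α i : ℂ) * (α i : ℂ))) * Qᴴ := by
    have h0 : M * M = Q * (Matrix.diagonal (fun i => (α i : ℂ))
        * ((Qᴴ * Q) * (Matrix.diagonal (fun i => (α i : ℂ)) * Qᴴ))) := by
      rw [hM]; simp only [Matrix.mul_assoc]
    rw [h0, hQ2, Matrix.one_mul,
      show Matrix.diagonal (fun i => (α i : ℂ)) * (Matrix.diagonal (fun i => (α i : ℂ)) * Qᴴ)
        = Matrix.diagonal (fun i => (α i : ℂ)) * Matrix.diagonal (fun i => (α i : ℂ)) * Qᴴ from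
        (Matrix.mul_assoc _ _ _).symm, hDD, ← Matrix.mul_assoc]
  have htr : Matrix.trace (M * M) = ∑ i, ((α i : ℂ) * (α i : ℂ)) := by
    rw [hMM, Matrix.mul_assoc, Matrix.trace_mul_comm, Matrix.mul_assoc, hQ2,
      Matrix.mul_one, Matrix.trace_diagonal]
  calc ∑ i, ∑ j, Complex.normSq (M i j) = ∑ i, ((M * M) i i).re :=
      Finset.sum_congr rfl fun i _ => inner i
    _ = (Matrix.trace (M * M)).re := by rw [Matrix.trace, Complex.re_sum]; rfl
    _ = ∑ i, α i * α i := by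
        rw [htr]
        have := congrArg Complex.re
          (show (∑ i, ((α i : ℂ) * (α i : ℂ))) = ((∑ i, α i * α i : ℝ) : ℂ) by push_cast; ring)
        simpa using this

end helpers

lemma submatrix_perm_unitary {n : ℕ} (U : Matrix (Fin n) (Fin n) ℂ)
    (hU : U ∈ Matrix.unitaryGroup (Fin n) ℂ) (σ : Equiv.Perm (Fin n)) :
    U.submatrix id ⇑σ ∈ Matrix.unitaryGroup (Fin n) ℂ := by
  rw [Matrix.mem_unitaryGroup_iff', Matrix.star_eq_conjTranspose,
    Matrix.conjTranspose_submatrix]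
  have h1 : Uᴴ.submatrix ⇑σ (⇑(Equiv.refl (Fin n))) * U.submatrix (⇑(Equiv.refl (Fin n))) ⇑σ
      = (Uᴴ * U).submatrix ⇑σ ⇑σ :=
    Matrix.submatrix_mul_equiv Uᴴ U ⇑σ (Equiv.refl (Fin n)) ⇑σ
  simp only [Equiv.coe_refl] at h1
  rw [h1]
  have h2 : Uᴴ * U = 1 := by
    rw [← Matrix.star_eq_conjTranspose]
    exact (Matrix.mem_unitaryGroup_iff').mp hU
  rw [h2]
  exact Matrix.submatrix_one_equiv σ

lemma conj_diag_submatrix {n : ℕ} (U D : Matrix (Fin n) (Fin n) ℂ) (σ : Equiv.Perm (Fin n)) :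
    (U.submatrix id ⇑σ) * (D.submatrix ⇑σ ⇑σ) * (U.submatrix id ⇑σ)ᴴ = U * D * Uᴴ := by
  rw [Matrix.conjTranspose_submatrix]
  have h1 : U.submatrix id ⇑σ * D.submatrix ⇑σ ⇑σ = (U * D).submatrix id ⇑σ :=
    Matrix.submatrix_mul_equiv U D id σ ⇑σ
  have h2 : (U * D).submatrix id ⇑σ * Uᴴ.submatrix ⇑σ id = ((U * D) * Uᴴ).submatrix id id :=
    Matrix.submatrix_mul_equiv (U * D) Uᴴ id σ id
  rw [h1, h2, Matrix.submatrix_id_id]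

lemma exists_unitary_conj {n : ℕ} (X : Matrix (Fin n) (Fin n) ℂ) (hX : X.IsHermitian)
    (δ : Fin n → ℝ) (σ : Equiv.Perm (Fin n)) (hδ : δ = hX.eigenvalues ∘ σ)
    (W : Matrix (Fin n) (Fin n) ℂ) (hW : W ∈ Matrix.unitaryGroup (Fin n) ℂ) :
    ∃ Q ∈ Matrix.unitaryGroup (Fin n) ℂ,
      Wᴴ * X * W = Q * Matrix.diagonal (fun i => (δ i : ℂ)) * Qᴴ := by
  set U : Matrix (Fin n) (Fin n) ℂ := (hX.eigenvectorUnitary : Matrix (Fin n) (Fin n) ℂ)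
    with hUdef
  have hU : U ∈ Matrix.unitaryGroup (Fin n) ℂ := SetLike.coe_mem _
  set Us : Matrix (Fin n) (Fin n) ℂ := U.submatrix id ⇑σ with hUs
  have hUsu : Us ∈ Matrix.unitaryGroup (Fin n) ℂ := submatrix_perm_unitary U hU σ
  refine ⟨Wᴴ * Us, ?_, ?_⟩
  · apply Submonoid.mul_mem
    · rw [← Matrix.star_eq_conjTranspose]
      exact Unitary.star_mem hW
    · exact hUsu
  · have hDδ : Matrix.diagonal (fun i => (δ i : ℂ))
        = (Matrix.diagonal (RCLike.ofReal ∘ hX.eigenvalues)).submatrix ⇑σ ⇑σ := by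
      rw [Matrix.submatrix_diagonal_equiv]
      congr 1
      funext i
      rw [hδ]
      rfl
    have hXeq : Us * Matrix.diagonal (fun i => (δ i : ℂ)) * Usᴴ = X := by
      rw [hDδ, hUs, conj_diag_submatrix, ← Matrix.star_eq_conjTranspose]
      exact hX.spectral_theorem.symm
    rw [Matrix.conjTranspose_mul, Matrix.conjTranspose_conjTranspose, ← hXeq]
    simp only [Matrix.mul_assoc]

/-- If `A`, `B` are Hermitian and the `k`-th largest eigenvalue of `A + B` equals the sum
of the `k`-th largest eigenvalues of `A` and `B` for every `k` (expressed via antitone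
enumerations `α`, `β`, `γ` of the respective spectra), then `A` and `B` are simultaneously
unitarily diagonalizable with eigenvalues on the diagonal in the same nonincreasing order. -/
theorem simultaneous_diagonalization_of_eigenvalue_additivity
    (n : ℕ) (A B : Matrix (Fin n) (Fin n) ℂ)
    (hA : A.IsHermitian) (hB : B.IsHermitian) (hAB : (A + B).IsHermitian)
    (α β γ : Fin n → ℝ)
    (hα : Antitone α) (hβ : Antitone β) (hγ : Antitone γ)
    (hαA : ∃ σ : Equiv.Perm (Fin n), α = hA.eigenvalues ∘ σ)
    (hβB : ∃ σ : Equiv.Perm (Fin n), β = hB.eigenvalues ∘ σ)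
    (hγAB : ∃ σ : Equiv.Perm (Fin n), γ = hAB.eigenvalues ∘ σ)
    (hsum : ∀ k, γ k = α k + β k) :
    ∃ V ∈ Matrix.unitaryGroup (Fin n) ℂ,
      Vᴴ * A * V = Matrix.diagonal (fun k => (α k : ℂ)) ∧
      Vᴴ * B * V = Matrix.diagonal (fun k => (β k : ℂ)) := by
  obtain ⟨σγ, hγ_eq⟩ := hγAB
  set U : Matrix (Fin n) (Fin n) ℂ := (hAB.eigenvectorUnitary : Matrix (Fin n) (Fin n) ℂ)
    with hUdef
  have hU : U ∈ Matrix.unitaryGroup (Fin n) ℂ := SetLike.coe_mem _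
  set W : Matrix (Fin n) (Fin n) ℂ := U.submatrix id ⇑σγ with hWdef
  have hWu : W ∈ Matrix.unitaryGroup (Fin n) ℂ := submatrix_perm_unitary U hU σγ
  have hWW : Wᴴ * W = 1 := by
    rw [← Matrix.star_eq_conjTranspose]
    exact (Matrix.mem_unitaryGroup_iff').mp hWu
  -- `Wᴴ (A+B) W = diagonal γ`
  have hDγ : Matrix.diagonal (fun i => (γ i : ℂ))
      = (Matrix.diagonal (RCLike.ofReal ∘ hAB.eigenvalues)).submatrix ⇑σγ ⇑σγ := by
    rw [Matrix.submatrix_diagonal_equiv]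
    congr 1
    funext i
    rw [hγ_eq]
    rfl
  have hABeq : W * Matrix.diagonal (fun i => (γ i : ℂ)) * Wᴴ = A + B := by
    rw [hDγ, hWdef, conj_diag_submatrix, ← Matrix.star_eq_conjTranspose]
    exact hAB.spectral_theorem.symm
  have hWAB : Wᴴ * (A + B) * W = Matrix.diagonal (fun i => (γ i : ℂ)) := by
    rw [← hABeq,
      show Wᴴ * (W * Matrix.diagonal (fun i => (γ i : ℂ)) * Wᴴ) * W
        = (Wᴴ * W) * (Matrix.diagonal (fun i => (γ i : ℂ)) * (Wᴴ * W)) by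
        simp only [Matrix.mul_assoc], hWW, Matrix.one_mul, Matrix.mul_one]
  obtain ⟨σa, hα_eq⟩ := hαA
  obtain ⟨σb, hβ_eq⟩ := hβB
  obtain ⟨QA, hQA, hMA⟩ := exists_unitary_conj A hA α σa hα_eq W hWu
  obtain ⟨QB, hQB, hMB⟩ := exists_unitary_conj B hB β σb hβ_eq W hWu
  set M : Matrix (Fin n) (Fin n) ℂ := Wᴴ * A * W with hMdef
  set N : Matrix (Fin n) (Fin n) ℂ := Wᴴ * B * W with hNdef
  have hMN : M + N = Matrix.diagonal (fun i => (γ i : ℂ)) := by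
    rw [hMdef, hNdef, ← hWAB, Matrix.mul_add, Matrix.add_mul]
  -- squeeze the diagonal partial sums
  have key : ∀ k : ℕ, k ≤ n →
      ∑ j ∈ Finset.univ.filter (fun i : Fin n => (i : ℕ) < k), (M j j).re
        = ∑ j ∈ Finset.univ.filter (fun i : Fin n => (i : ℕ) < k), α j := by
    intro k hk
    have h1 := kyFan QA hQA α hα k hk
    rw [← hMA] at h1
    have h2 := kyFan QB hQB β hβ k hk
    rw [← hMB] at h2
    have h3 : ∀ j : Fin n, (M j j).re + (N j j).re = γ j := by
      intro j
      have h5 : (M + N) j j = ((γ j : ℝ) : ℂ) := by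
        rw [hMN]; simp [Matrix.diagonal_apply_eq]
      have h6 := congrArg Complex.re h5
      simpa [Matrix.add_apply] using h6
    have h4 : ∑ j ∈ Finset.univ.filter (fun i : Fin n => (i : ℕ) < k),
        ((M j j).re + (N j j).re)
        = ∑ j ∈ Finset.univ.filter (fun i : Fin n => (i : ℕ) < k), (α j + β j) := by
      refine Finset.sum_congr rfl fun j _ => ?_
      rw [h3 j, hsum j]
    rw [Finset.sum_add_distrib, Finset.sum_add_distrib] at h4
    linarith
  have hMherm : M.IsHermitian := hMdef ▸ (Matrix.isHermitian_conjTranspose_mul_mul W hA)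
  -- diagonal entries of M are the α's
  have hMdiag : ∀ j : Fin n, M j j = ((α j : ℝ) : ℂ) := by
    intro j
    have hre : (M j j).re = α j := by
      have e1 := key j.val (le_of_lt j.isLt)
      have e2 := key (j.val + 1) j.isLt
      have hins : Finset.univ.filter (fun i : Fin n => (i : ℕ) < j.val + 1)
          = insert j (Finset.univ.filter (fun i : Fin n => (i : ℕ) < j.val)) := by
        ext i
        simp only [Finset.mem_filter, Finset.mem_univ, true_and, Finset.mem_insert, Fin.ext_iff]
        omega
      have hnotmem : j ∉ Finset.univ.filter (fun i : Fin n => (i : ℕ) < j.val) := by simp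
      rw [hins, Finset.sum_insert hnotmem, Finset.sum_insert hnotmem] at e2
      linarith
    have him : (M j j).im = 0 := by
      have h7 : Mᴴ j j = M j j := by rw [hMherm.eq]
      rw [Matrix.conjTranspose_apply, Complex.star_def] at h7
      exact Complex.conj_eq_iff_im.mp h7
    exact Complex.ext (by rw [hre]; simp) (by rw [him]; simp)
  -- Frobenius-norm argument: off-diagonal entries vanish
  have hfro := frob QA hQA α
  rw [← hMA] at hfro
  have hdiagsum : ∑ j, Complex.normSq (M j j) = ∑ j, α j * α j := by
    refine Finset.sum_congr rfl fun j _ => ?_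
    rw [hMdiag j, Complex.normSq_ofReal]
  have hoffsum : ∑ i, ∑ j ∈ Finset.univ.erase i, Complex.normSq (M i j) = 0 := by
    have h8 : ∑ i, ∑ j, Complex.normSq (M i j)
        = ∑ i, (Complex.normSq (M i i) + ∑ j ∈ Finset.univ.erase i, Complex.normSq (M i j)) := by
      refine Finset.sum_congr rfl fun i _ => ?_
      exact (Finset.add_sum_erase Finset.univ _ (Finset.mem_univ i)).symm
    rw [Finset.sum_add_distrib] at h8
    rw [hfro] at h8
    linarith [hdiagsum]
  have hoff : ∀ i j : Fin n, i ≠ j → M i j = 0 := by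
    intro i j hij
    have h9 := (Finset.sum_eq_zero_iff_of_nonneg
      (fun i _ => Finset.sum_nonneg fun j _ => Complex.normSq_nonneg _)).mp hoffsum i
      (Finset.mem_univ i)
    have h10 := (Finset.sum_eq_zero_iff_of_nonneg
      (fun j _ => Complex.normSq_nonneg _)).mp h9 j
      (Finset.mem_erase.mpr ⟨Ne.symm hij, Finset.mem_univ j⟩)
    exact Complex.normSq_eq_zero.mp h10
  have hMfinal : M = Matrix.diagonal (fun k => (α k : ℂ)) := by
    ext i j
    by_cases h : i = j
    · subst h
      rw [Matrix.diagonal_apply_eq]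
      exact hMdiag i
    · rw [Matrix.diagonal_apply_ne _ h]
      exact hoff i j h
  have hNfinal : N = Matrix.diagonal (fun k => (β k : ℂ)) := by
    have h11 : N = Matrix.diagonal (fun i => (γ i : ℂ)) - M := by
      rw [← hMN]; abel
    rw [h11, hMfinal, Matrix.diagonal_sub]
    exact congrArg Matrix.diagonal (funext fun k => by rw [hsum k]; push_cast; ring)
  exact ⟨W, hWu, hMfinal, hNfinal⟩
end
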